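/- Let γ_passive(N) = N² · P_BS-P · π² ϱ_f² ϱ_g² / (16σ²) and γ_active(N) = N · P_BS-A · P_A · π² ϱ_f² ϱ_g² / (16·(P_A σ_v² ϱ_f² + P_BS-A σ² ϱ_g² + σ² σ_v²)), with all parameters positive. Then γ_passive(N) ≥ γ_active(N) if and only if N ≥ (P_BS-A / P_BS-P) · P_A σ² / (P_A σ_v² ϱ_f² + P_BS-A σ² ϱ_g² + σ² σ_v²). -/
import Mathlib

theorem stmt_7 (N PBSP PBSA PA ϱf2 ϱg2 σ2 σv2 : ℝ)
    (hN : 0 < N) (hP : 0 < PBSP) (hA : 0 < PBSA) (hPA : 0 < PA)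
    (hf : 0 < ϱf2) (hg : 0 < ϱg2) (hσ : 0 < σ2) (hσv : 0 < σv2) :
    N ^ 2 * PBSP * Real.pi ^ 2 * ϱf2 * ϱg2 / (16 * σ2) ≥
      N * PBSA * PA * Real.pi ^ 2 * ϱf2 * ϱg2 /
        (16 * (PA * σv2 * ϱf2 + PBSA * σ2 * ϱg2 + σ2 * σv2)) ↔
    N ≥ (PBSA / PBSP) * (PA * σ2) / (PA * σv2 * ϱf2 + PBSA * σ2 * ϱg2 + σ2 * σv2) := by
  have hD : 0 < PA * σv2 * ϱf2 + PBSA * σ2 * ϱg2 + σ2 * σv2 := by positivity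
  have hπ : 0 < Real.pi ^ 2 := by positivity
  rw [ge_iff_le, ge_iff_le, div_le_div_iff₀ (by positivity) (by positivity),
    div_le_iff₀ hD, div_mul_eq_mul_div, div_le_iff₀ hP]
  constructor
  · intro h
    nlinarith [mul_pos hN hπ, mul_pos hf hg, mul_pos (mul_pos hN hπ) (mul_pos hf hg)]
  · intro h
    nlinarith [mul_pos hN hπ, mul_pos hf hg, mul_pos (mul_pos hN hπ) (mul_pos hf hg)]
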